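/- For every γ ∈ (1 − 2π⁻², 1) one has m_γ < 1. -/

import Mathlib

open MeasureTheory Set Real

noncomputable section

/-- Pairs `(y, y')` representing a function of Sobolev class `W¹₂[0,1]`:
`y` is absolutely continuous on `[0,1]` (being an integral of `y'`)
with derivative `y'` belonging to `L²[0,1]`. -/
def W12 : Set ((ℝ → ℝ) × (ℝ → ℝ)) :=
  {p | (∀ x ∈ Icc (0:ℝ) 1, p.1 x = p.1 0 + ∫ t in (0:ℝ)..x, p.2 t) ∧
    IntervalIntegrable p.2 volume 0 1 ∧
    IntervalIntegrable (fun t => (p.2 t) ^ 2) volume 0 1}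

/-- The Rayleigh quotient `(∫₀¹ ((y')² + q y²) dx) / (∫₀¹ y² dx)`. -/
def Rayleigh (q : ℝ → ℝ) (p : (ℝ → ℝ) × (ℝ → ℝ)) : ℝ :=
  (∫ t in (0:ℝ)..1, ((p.2 t) ^ 2 + q t * (p.1 t) ^ 2)) /
    ∫ t in (0:ℝ)..1, (p.1 t) ^ 2

/-- The smallest eigenvalue `λ₁(q)` of the Neumann problem `-y'' + q y = λ y`,
`y'(0) = y'(1) = 0`, defined as the infimum of Rayleigh quotients over
nonzero `y ∈ W¹₂[0,1]`. -/
def lambda1 (q : ℝ → ℝ) : ℝ :=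
  sInf {r | ∃ p ∈ W12, 0 < (∫ t in (0:ℝ)..1, (p.1 t) ^ 2) ∧ r = Rayleigh q p}

/-- The class `A_γ` of potentials: `q ∈ L¹[0,1]`, `q ≥ 0` a.e. on `[0,1]`,
`∫₀¹ q^γ dx = 1`. -/
def Agamma (γ : ℝ) : Set (ℝ → ℝ) :=
  {q | IntervalIntegrable q volume 0 1 ∧
    (∀ᵐ t ∂(volume.restrict (Icc (0:ℝ) 1)), 0 ≤ q t) ∧
    (∫ t in (0:ℝ)..1, q t ^ γ) = 1}

/-- `m_γ := inf_{q ∈ A_γ} λ₁(q)`. -/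
def mGamma (γ : ℝ) : ℝ := sInf (lambda1 '' Agamma γ)

/-- The set `M` of uniformly positive functions of class `W¹₂[0,1]`. -/
def Mset : Set ((ℝ → ℝ) × (ℝ → ℝ)) :=
  {p ∈ W12 | ∃ ζ > (0:ℝ), ∀ x ∈ Icc (0:ℝ) 1, ζ ≤ p.1 x}

/-- `J_γ(y) := ∫₀¹ (y')² dx + (∫₀¹ y^{2γ/(γ−1)} dx)^{(γ−1)/γ}`. -/
def Jg (γ : ℝ) (p : (ℝ → ℝ) × (ℝ → ℝ)) : ℝ :=
  (∫ t in (0:ℝ)..1, (p.2 t) ^ 2) +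
    (∫ t in (0:ℝ)..1, (p.1 t) ^ (2 * γ / (γ - 1))) ^ ((γ - 1) / γ)

/-- `G_γ(y) := J_γ(y) / ∫₀¹ y² dx`. -/
def Gg (γ : ℝ) (p : (ℝ → ℝ) × (ℝ → ℝ)) : ℝ :=
  Jg γ p / ∫ t in (0:ℝ)..1, (p.1 t) ^ 2




-- Bernoulli for exponents in [-1,0]: lower bound
lemma bernoulli_neg {u σ : ℝ} (hu : -1 < u) (h1 : -1 ≤ σ) (h2 : σ ≤ 0) :
    1 + σ * u ≤ (1 + u) ^ σ := by
  have hp1 : (0:ℝ) ≤ -σ := by linarith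
  have hp2 : -σ ≤ 1 := by linarith
  have hb : (1 + u) ^ (-σ) ≤ 1 + (-σ) * u :=
    rpow_one_add_le_one_add_mul_self hu.le hp1 hp2
  have hpos : 0 < 1 + (-σ) * u := by
    rcases le_or_gt 0 u with h | h
    · nlinarith [mul_nonneg hp1 h]
    · nlinarith [mul_nonpos_of_nonneg_of_nonpos (by linarith : (0:ℝ) ≤ 1+σ) h.le]
  have hpow : (0:ℝ) < (1+u) ^ (-σ) := rpow_pos_of_pos (by linarith) _
  have heq : (1 + u) ^ σ = ((1+u) ^ (-σ))⁻¹ := by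
    rw [← Real.rpow_neg (by linarith : (0:ℝ) ≤ 1+u), neg_neg]
  rw [heq]
  have h3 : (1 + (-σ)*u)⁻¹ ≤ ((1+u) ^ (-σ))⁻¹ := by
    gcongr
  refine le_trans ?_ h3
  rw [← one_div, le_div_iff₀ hpos]
  nlinarith [sq_nonneg (σ*u)]

lemma intble_one_add_rpow (s : ℝ) {a b : ℝ} (h : ∀ x ∈ Set.uIcc a b, 0 < 1 + x) :
    IntervalIntegrable (fun u => (1+u) ^ s) volume a b := by
  apply ContinuousOn.intervalIntegrable
  apply ContinuousOn.rpow_const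
  · exact (continuous_const.add continuous_id).continuousOn
  · intro x hx; exact Or.inl (h x hx).ne'

lemma int_one_add_rpow {s : ℝ} (hs : -1 < s) (a b : ℝ) :
    ∫ u in a..b, (1+u) ^ s = ((1+b) ^ (s+1) - (1+a) ^ (s+1)) / (s+1) := by
  have h := intervalIntegral.integral_comp_add_left (a := a) (b := b) (fun x => x ^ s) 1
  rw [h, integral_rpow (Or.inl hs)]

-- case v ≥ 0
lemma key_pos {r : ℝ} (hr1 : 1 < r) (hr2 : r ≤ 2) {v : ℝ} (hv : 0 ≤ v) :
    (1+v) ^ r ≤ 1 + r*v + (r*(r-1)/2)*v^2 := by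
  have hmono : ∫ u in (0:ℝ)..v, (1+u)^(r-1) ≤ ∫ u in (0:ℝ)..v, (1 + (r-1)*u) := by
    apply intervalIntegral.integral_mono_on hv
    · apply intble_one_add_rpow
      intro x hx
      rw [Set.uIcc_of_le hv] at hx
      linarith [hx.1]
    · exact ((by fun_prop : Continuous (fun u : ℝ => 1 + (r-1)*u))).intervalIntegrable _ _
    · intro x hx
      have := rpow_one_add_le_one_add_mul_self (s := x) (by linarith [hx.1] : (-1:ℝ) ≤ x)
        (by linarith : (0:ℝ) ≤ r-1) (by linarith : r-1 ≤ 1)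
      linarith [this]
  rw [int_one_add_rpow (by linarith : (-1:ℝ) < r-1)] at hmono
  have hpoly : ∫ u in (0:ℝ)..v, (1 + (r-1)*u) = v + (r-1)*v^2/2 := by
    rw [intervalIntegral.integral_add (intervalIntegrable_const)
      (((by fun_prop : Continuous (fun u : ℝ => (r-1)*u))).intervalIntegrable _ _),
      intervalIntegral.integral_const, intervalIntegral.integral_const_mul, integral_id]
    simp; ring
  rw [hpoly] at hmono
  have he : r - 1 + 1 = r := by ring
  rw [he] at hmono
  simp only [add_zero, Real.one_rpow] at hmono
  have hr0 : (0:ℝ) < r := by linarith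
  rw [div_le_iff₀ hr0] at hmono
  nlinarith [hmono]

-- case v ≤ 0
lemma key_neg {r : ℝ} (hr1 : 1 < r) (hr2 : r ≤ 2) {v : ℝ} (hv : -(1/2) ≤ v) (hv0 : v ≤ 0) :
    (1+v) ^ r ≤ 1 + r*v + (r*(r-1)/2)*v^2 + (r*(r-2)/3)*v^3 := by
  have hmono : ∫ u in v..(0:ℝ), (1 + (r-1)*u + (r-2)*u^2) ≤ ∫ u in v..(0:ℝ), (1+u)^(r-1) := by
    apply intervalIntegral.integral_mono_on hv0
    · exact ((by fun_prop : Continuous (fun u : ℝ => 1 + (r-1)*u + (r-2)*u^2))).intervalIntegrable _ _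
    · apply intble_one_add_rpow
      intro x hx
      rw [Set.uIcc_of_le hv0] at hx
      linarith [hx.1]
    · intro x hx
      have hx1 : -(1/2:ℝ) ≤ x := le_trans hv hx.1
      have hpos : (0:ℝ) < 1 + x := by linarith
      have hb : 1 + (r-2) * x ≤ (1+x) ^ (r-2) :=
        bernoulli_neg (by linarith) (by linarith) (by linarith)
      have hsplit : (1+x) ^ (r-1) = (1+x) * (1+x) ^ (r-2) := by
        rw [show r-1 = 1+(r-2) by ring, Real.rpow_add hpos, Real.rpow_one]
      rw [hsplit]
      have := mul_le_mul_of_nonneg_left hb (by linarith : (0:ℝ) ≤ 1+x)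
      nlinarith [this]
  have hpoly : ∫ u in v..(0:ℝ), (1 + (r-1)*u + (r-2)*u^2) =
      -v - (r-1)*v^2/2 - (r-2)*v^3/3 := by
    rw [intervalIntegral.integral_add
      (((by fun_prop : Continuous (fun u : ℝ => 1 + (r-1)*u))).intervalIntegrable _ _)
      (((by fun_prop : Continuous (fun u : ℝ => (r-2)*u^2))).intervalIntegrable _ _),
      intervalIntegral.integral_add (intervalIntegrable_const)
      (((by fun_prop : Continuous (fun u : ℝ => (r-1)*u))).intervalIntegrable _ _),
      intervalIntegral.integral_const, intervalIntegral.integral_const_mul,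
      intervalIntegral.integral_const_mul, integral_id, integral_pow]
    push_cast
    simp only [smul_eq_mul]
    ring
  rw [int_one_add_rpow (by linarith : (-1:ℝ) < r-1), hpoly] at hmono
  have he : r - 1 + 1 = r := by ring
  rw [he] at hmono
  simp only [add_zero, Real.one_rpow] at hmono
  have hr0 : (0:ℝ) < r := by linarith
  rw [le_div_iff₀ hr0] at hmono
  nlinarith [hmono]

-- combined key lemma
lemma key_rpow {r : ℝ} (hr1 : 1 < r) (hr2 : r ≤ 2) {v : ℝ} (hv : |v| ≤ 1/2) :
    (1+v) ^ r ≤ 1 + r*v + (r*(r-1)/2)*v^2 + |v|^3 := by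
  rw [abs_le] at hv
  rcases le_or_gt 0 v with h | h
  · have := key_pos hr1 hr2 h
    have h3 : (0:ℝ) ≤ |v|^3 := by positivity
    linarith
  · have := key_neg hr1 hr2 (by linarith [hv.1]) h.le
    have habs : |v| = -v := abs_of_neg h
    have hcube : (r*(r-2)/3)*v^3 ≤ |v|^3 := by
      rw [habs]
      nlinarith [mul_pos (mul_pos (neg_pos.mpr h) (neg_pos.mpr h)) (neg_pos.mpr h), sq_nonneg (r-1)]
    linarith


lemma icos : ∫ t in (0:ℝ)..1, Real.cos (π*t) = 0 := by
  rw [intervalIntegral.integral_comp_mul_left (fun x => Real.cos x) pi_ne_zero]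
  simp [integral_cos, Real.sin_pi]

lemma icos2 : ∫ t in (0:ℝ)..1, Real.cos (π*t)^2 = 1/2 := by
  rw [intervalIntegral.integral_comp_mul_left (fun x => Real.cos x ^ 2) pi_ne_zero]
  rw [integral_cos_sq]
  simp [Real.sin_pi, Real.cos_pi]
  field_simp

lemma isin2 : ∫ t in (0:ℝ)..1, Real.sin (π*t)^2 = 1/2 := by
  rw [intervalIntegral.integral_comp_mul_left (fun x => Real.sin x ^ 2) pi_ne_zero]
  rw [integral_sin_sq]
  simp [Real.sin_pi, Real.cos_pi]
  field_simp

set_option maxHeartbeats 1000000 in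
lemma pointwise_bound {r δ ε c : ℝ} (hr1 : 1 < r) (hr2 : r ≤ 2)
    (hc : |c| ≤ 1) (hδ : |δ| ≤ 1/2) (hε0 : 0 ≤ ε) (hε : ε ≤ 1/2) :
    (1 + δ*c) ^ r * (1 + ε*c)^2 ≤
      1 + (2*ε + r*δ)*c + (ε^2 + 2*r*δ*ε + r*(r-1)*δ^2/2)*c^2
        + (r* |δ| *ε^2 + r*(r-1)*δ^2*ε + (r*(r-1)/2)*δ^2*ε^2 + |δ|^3*(1+ε)^2) := by
  have hv : |δ*c| ≤ 1/2 := by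
    rw [abs_mul]
    calc |δ| * |c| ≤ |δ| * 1 := by gcongr
    _ ≤ 1/2 := by rw [mul_one]; exact hδ
  have hk := key_rpow hr1 hr2 hv
  have h1 : (1 + δ*c) ^ r * (1 + ε*c)^2 ≤
      (1 + r*(δ*c) + (r*(r-1)/2)*(δ*c)^2 + |δ*c|^3) * (1 + ε*c)^2 :=
    mul_le_mul_of_nonneg_right hk (sq_nonneg _)
  refine h1.trans ?_
  have hc' := abs_le.mp hc
  have hδ' := abs_le.mp hδ
  have hrr : (0:ℝ) ≤ r*(r-1) := by nlinarith
  have hcc : |c|^3 ≤ 1 := pow_le_one₀ (abs_nonneg c) hc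
  have hc3 : c^3 ≤ 1 := le_trans (le_trans (le_abs_self _) (by rw [abs_pow])) hcc
  have hc2 : c^2 ≤ 1 := by nlinarith [hc'.1, hc'.2]
  have hc4 : c^4 ≤ 1 := by nlinarith [hc2, sq_nonneg c]
  have ha : r*δ*ε^2*c^3 ≤ r* |δ| *ε^2 := by
    have h2 : δ*c^3 ≤ |δ| := by
      calc δ*c^3 ≤ |δ*c^3| := le_abs_self _
      _ = |δ| * |c|^3 := by rw [abs_mul, abs_pow]
      _ ≤ |δ| * 1 := by gcongr
      _ = |δ| := mul_one _
    calc r*δ*ε^2*c^3 = (r*ε^2) * (δ*c^3) := by ring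
    _ ≤ (r*ε^2) * |δ| := by
        apply mul_le_mul_of_nonneg_left h2
        positivity
    _ = r* |δ| *ε^2 := by ring
  have hb : r*(r-1)*δ^2*ε*c^3 ≤ r*(r-1)*δ^2*ε := by
    calc r*(r-1)*δ^2*ε*c^3 = (r*(r-1)*δ^2*ε) * c^3 := by ring
    _ ≤ (r*(r-1)*δ^2*ε) * 1 := by
        apply mul_le_mul_of_nonneg_left hc3
        positivity
    _ = r*(r-1)*δ^2*ε := mul_one _
  have hcterm : (r*(r-1)/2)*δ^2*ε^2*c^4 ≤ (r*(r-1)/2)*δ^2*ε^2 := by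
    calc (r*(r-1)/2)*δ^2*ε^2*c^4 = ((r*(r-1)/2)*δ^2*ε^2) * c^4 := by ring
    _ ≤ ((r*(r-1)/2)*δ^2*ε^2) * 1 := by
        apply mul_le_mul_of_nonneg_left hc4
        positivity
    _ = (r*(r-1)/2)*δ^2*ε^2 := mul_one _
  have hd : |δ*c|^3*(1+ε*c)^2 ≤ |δ|^3*(1+ε)^2 := by
    have h5 : |δ*c|^3 ≤ |δ|^3 := by
      rw [abs_mul]
      calc (|δ| *|c|)^3 ≤ (|δ| *1)^3 := by
            apply pow_le_pow_left₀ (by positivity) (by gcongr) 3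
      _ = |δ|^3 := by rw [mul_one]
    have h6 : (1+ε*c)^2 ≤ (1+ε)^2 := by
      apply sq_le_sq'
      · nlinarith [hc'.1, hc'.2]
      · nlinarith [hc'.1, hc'.2]
    calc |δ*c|^3*(1+ε*c)^2 ≤ |δ|^3*(1+ε*c)^2 := by
          apply mul_le_mul_of_nonneg_right h5 (sq_nonneg _)
    _ ≤ |δ|^3*(1+ε)^2 := by
          apply mul_le_mul_of_nonneg_left h6 (by positivity)
  have hring : (1 + r*(δ*c) + r*(r-1)/2*(δ*c)^2 + |δ*c| ^3) * (1 + ε*c)^2 =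
      (1 + (2*ε + r*δ)*c + (ε^2 + 2*r*δ*ε + r*(r-1)*δ^2/2)*c^2)
      + (r*δ*ε^2*c^3 + r*(r-1)*δ^2*ε*c^3 + (r*(r-1)/2)*δ^2*ε^2*c^4 + |δ*c| ^3*(1+ε*c)^2) := by
    ring
  rw [hring]
  linarith [ha, hb, hcterm, hd]

set_option maxHeartbeats 1000000 in
lemma main_est {r ρ η ε δ : ℝ} (hr : r = 1+ρ) (hρ0 : 0<ρ) (hρ1 : ρ<1) (hr2 : r ≤ 2)
    (hκ : π^2*ρ/2 < r) (hη0 : 0<η) (hη1 : η ≤ 1/4) (hη2 : η ≤ (r - π^2*ρ/2)*ρ/27)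
    (hε : ε = ρ*η) (hδ : δ = -(2*η)) :
    π^2/2*ε^2 + r*δ*ε + (r*ρ/4)*δ^2
      + (r* |δ| *ε^2 + r*(r-1)*δ^2*ε + (r*(r-1)/2)*δ^2*ε^2 + |δ| ^3*(1+ε)^2) < 0 := by
  have habs : |δ| = 2*η := by rw [hδ, abs_neg, abs_of_nonneg (by linarith)]
  have hκ0 : 0 < r - π^2*ρ/2 := by linarith
  have hρη : ρ*η ≤ 1/4 := by nlinarith
  have hr0 : (0:ℝ) < r := by linarith
  have hρ2 : ρ^2 ≤ 1 := by nlinarith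
  have hρ2' : (0:ℝ) ≤ ρ^2 := sq_nonneg ρ
  have ha : r*ρ^2 ≤ 2 := by nlinarith
  have hρ3 : ρ^3 ≤ 1 := by nlinarith
  have hρ3' : (0:ℝ) ≤ ρ^3 := by positivity
  have hb' : r*ρ^3 ≤ 2 := by nlinarith
  have hb : r*ρ^3*η ≤ 1/2 := by nlinarith
  have hρη0 : (0:ℝ) ≤ ρ*η := by positivity
  have hcbd : (1+ρ*η)^2 ≤ 25/16 := by nlinarith
  have hX : 6*r*ρ^2 + 2*r*ρ^3*η + 8*(1+ρ*η)^2 ≤ 26 := by nlinarith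
  have h26 : 0 < (r - π^2*ρ/2) * ρ := mul_pos hκ0 hρ0
  have h2 : η*26 < (r - π^2*ρ/2)*ρ := by linarith
  have h1 : η*(6*r*ρ^2 + 2*r*ρ^3*η + 8*(1+ρ*η)^2) ≤ η*26 :=
    mul_le_mul_of_nonneg_left hX hη0.le
  have h3 : π^2/2*ε^2 + r*δ*ε + (r*ρ/4)*δ^2
      + (r* |δ| *ε^2 + r*(r-1)*δ^2*ε + (r*(r-1)/2)*δ^2*ε^2 + |δ| ^3*(1+ε)^2)
      = -((r - π^2*ρ/2)*ρ)*η^2 + η^2*(η*(6*r*ρ^2 + 2*r*ρ^3*η + 8*(1+ρ*η)^2)) := by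
    rw [habs, hε, hδ, hr]; ring
  rw [h3]
  have h4 : η^2*(η*(6*r*ρ^2 + 2*r*ρ^3*η + 8*(1+ρ*η)^2)) < η^2*((r - π^2*ρ/2)*ρ) :=
    mul_lt_mul_of_pos_left (lt_of_le_of_lt h1 h2) (pow_pos hη0 2)
  nlinarith [h4]


lemma rayleigh_nonneg {γ : ℝ} {q : ℝ → ℝ} (hq : q ∈ Agamma γ) :
    ∀ x ∈ {r | ∃ p ∈ W12, 0 < (∫ t in (0:ℝ)..1, (p.1 t) ^ 2) ∧ r = Rayleigh q p}, (0:ℝ) ≤ x := by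
  rintro x ⟨p, hpW, hpos, rfl⟩
  unfold Rayleigh
  apply div_nonneg _ hpos.le
  rw [intervalIntegral.integral_of_le zero_le_one]
  apply MeasureTheory.integral_nonneg_of_ae
  have h1 : ∀ᵐ t ∂(volume.restrict (Ioc (0:ℝ) 1)), 0 ≤ q t :=
    MeasureTheory.ae_mono (MeasureTheory.Measure.restrict_mono Ioc_subset_Icc_self le_rfl) hq.2.1
  filter_upwards [h1] with t ht
  simp only [Pi.zero_apply]
  nlinarith [mul_nonneg ht (sq_nonneg (p.1 t)), sq_nonneg (p.2 t)]

lemma lambda1_nonneg {γ : ℝ} {q : ℝ → ℝ} (hq : q ∈ Agamma γ) : 0 ≤ lambda1 q :=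
  Real.sInf_nonneg (rayleigh_nonneg hq)

set_option maxHeartbeats 2000000 in
/-- For every `γ ∈ (1 − 2π⁻², 1)` one has `m_γ < 1`. -/
theorem mGamma_lt_one (γ : ℝ) (hγ : γ ∈ Ioo (1 - 2 / π ^ 2) 1) :
    mGamma γ < 1 := by
  obtain ⟨hγl, hγu⟩ := hγ
  have hπ : 3 < π := pi_gt_three
  have hπ2 : 9 < π^2 := by nlinarith
  have hπ2pos : (0:ℝ) < π^2 := by linarith
  have hhalf : 2/π^2 < 1/2 := by rw [div_lt_div_iff₀ hπ2pos (by norm_num)]; linarith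
  have hγhalf : 1/2 < γ := by linarith
  have hγ0 : 0 < γ := by linarith
  -- parameters
  obtain ⟨r, hrdef⟩ : ∃ x : ℝ, x = 1/γ := ⟨_, rfl⟩
  obtain ⟨ρ, hρdef⟩ : ∃ x : ℝ, x = (1-γ)/γ := ⟨_, rfl⟩
  have hρr : r = 1 + ρ := by rw [hrdef, hρdef]; field_simp; ring
  have hρ0 : 0 < ρ := by rw [hρdef]; exact div_pos (by linarith) hγ0
  have hρ1 : ρ < 1 := by rw [hρdef, div_lt_one hγ0]; linarith
  have hr1 : 1 < r := by linarith
  have hr2 : r ≤ 2 := by linarith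
  have h1γ : 1 - γ < 2/π^2 := by linarith
  have hκpos : 0 < r - π^2*ρ/2 := by
    have heq : r - π^2*ρ/2 = (2 - (1-γ)*π^2)/(2*γ) := by
      rw [hrdef, hρdef]; field_simp
    have h2 : (1-γ)*π^2 < 2 := (lt_div_iff₀ hπ2pos).mp h1γ
    rw [heq]
    exact div_pos (by linarith) (by linarith)
  -- the small parameters
  obtain ⟨η, hηdef⟩ : ∃ x : ℝ, x = min (1/4) ((r - π^2*ρ/2)*ρ/27) := ⟨_, rfl⟩
  have hη0 : 0 < η := by
    rw [hηdef]
    exact lt_min (by norm_num) (div_pos (mul_pos hκpos hρ0) (by norm_num))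
  have hη1 : η ≤ 1/4 := hηdef ▸ min_le_left _ _
  have hη2 : η ≤ (r - π^2*ρ/2)*ρ/27 := hηdef ▸ min_le_right _ _
  obtain ⟨ε, hεdef⟩ : ∃ x : ℝ, x = ρ*η := ⟨_, rfl⟩
  obtain ⟨δ, hδdef⟩ : ∃ x : ℝ, x = -(2*η) := ⟨_, rfl⟩
  have hε0 : 0 < ε := by rw [hεdef]; positivity
  have hεhalf : ε ≤ 1/2 := by rw [hεdef]; nlinarith
  have hδabs : |δ| = 2*η := by rw [hδdef, abs_neg, abs_of_nonneg (by linarith)]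
  have hδhalf : |δ| ≤ 1/2 := by rw [hδabs]; linarith
  -- test potential and test function
  obtain ⟨q, hqdef⟩ : ∃ f : ℝ → ℝ, f = fun t => (1 + δ * Real.cos (π*t)) ^ r := ⟨_, rfl⟩
  obtain ⟨Y, hYdef⟩ : ∃ f : ℝ → ℝ, f = fun t => 1 + ε * Real.cos (π*t) := ⟨_, rfl⟩
  obtain ⟨Y', hY'def⟩ : ∃ f : ℝ → ℝ, f = fun t => -(ε*π*Real.sin (π*t)) := ⟨_, rfl⟩
  have hqt : ∀ t, q t = (1 + δ * Real.cos (π*t)) ^ r := fun t => by rw [hqdef]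
  have hYt : ∀ t, Y t = 1 + ε * Real.cos (π*t) := fun t => by rw [hYdef]
  have hY't : ∀ t, Y' t = -(ε*π*Real.sin (π*t)) := fun t => by rw [hY'def]
  have hbase0 : ∀ t : ℝ, 0 < 1 + δ * Real.cos (π*t) := by
    intro t
    have h1 : |δ * Real.cos (π*t)| ≤ 1/2 := by
      rw [abs_mul]
      calc |δ| * |Real.cos (π*t)| ≤ |δ| * 1 :=
            mul_le_mul_of_nonneg_left (Real.abs_cos_le_one _) (abs_nonneg _)
      _ ≤ 1/2 := by rw [mul_one]; exact hδhalf
    have h2 := neg_abs_le (δ * Real.cos (π*t))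
    linarith
  have hYcont : Continuous Y := by rw [hYdef]; fun_prop
  have hY'cont : Continuous Y' := by rw [hY'def]; fun_prop
  have hq_cont : Continuous q := by
    rw [hqdef]
    exact Continuous.rpow_const (by fun_prop) (fun t => Or.inl (hbase0 t).ne')
  -- q ∈ Agamma γ
  have hqγ : ∀ t : ℝ, (q t) ^ γ = 1 + δ * Real.cos (π*t) := by
    intro t
    rw [hqt t, ← Real.rpow_mul (hbase0 t).le, hrdef, one_div, inv_mul_cancel₀ hγ0.ne',
      Real.rpow_one]
  have hicos : ∫ t in (0:ℝ)..1, (1 + δ * Real.cos (π*t)) = 1 := by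
    rw [intervalIntegral.integral_add intervalIntegrable_const
      (((by fun_prop : Continuous (fun t : ℝ => δ * Real.cos (π*t)))).intervalIntegrable _ _),
      intervalIntegral.integral_const, intervalIntegral.integral_const_mul, icos]
    simp
  have hqA : q ∈ Agamma γ := by
    refine ⟨hq_cont.intervalIntegrable _ _, ?_, ?_⟩
    · filter_upwards with t
      rw [hqt t]
      exact Real.rpow_nonneg (hbase0 t).le _
    · calc ∫ t in (0:ℝ)..1, q t ^ γ = ∫ t in (0:ℝ)..1, (1 + δ * Real.cos (π*t)) := by
            simp only [hqγ]
      _ = 1 := hicos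
  -- the pair (Y, Y') is in W12
  have hderiv : ∀ t : ℝ, HasDerivAt (fun s => ε * Real.cos (π*s)) (Y' t) t := by
    intro t
    have h1 : HasDerivAt (fun s : ℝ => π*s) π t := by
      simpa using (hasDerivAt_id t).const_mul π
    have h2 := (h1.cos).const_mul ε
    rw [hY't]
    rw [show -(ε*π*Real.sin (π*t)) = ε * (-Real.sin (π*t) * π) by ring]
    exact h2
  have hW : (Y, Y') ∈ W12 := by
    refine ⟨?_, hY'cont.intervalIntegrable _ _, (hY'cont.pow 2).intervalIntegrable _ _⟩
    intro x _
    have hint : ∫ t in (0:ℝ)..x, Y' t = ε * Real.cos (π*x) - ε * Real.cos (π*0) :=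
      intervalIntegral.integral_eq_sub_of_hasDerivAt (fun t _ => hderiv t)
        (hY'cont.intervalIntegrable _ _)
    show Y x = Y 0 + _
    rw [hint, hYt, hYt]
    simp [Real.cos_zero]
  -- integral computations
  have hIy : ∫ t in (0:ℝ)..1, (Y t)^2 = 1 + ε^2*(1/2) := by
    have hfun : ∀ t : ℝ, (Y t)^2 = 1 + (2*ε) * Real.cos (π*t) + ε^2 * Real.cos (π*t)^2 := by
      intro t; rw [hYt]; ring
    calc ∫ t in (0:ℝ)..1, (Y t)^2
        = ∫ t in (0:ℝ)..1, (1 + (2*ε) * Real.cos (π*t) + ε^2 * Real.cos (π*t)^2) := by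
          simp only [hfun]
      _ = 1 + ε^2*(1/2) := by
          rw [intervalIntegral.integral_add (IntervalIntegrable.add
              intervalIntegrable_const
              (((by fun_prop : Continuous (fun t : ℝ => (2*ε) * Real.cos (π*t)))).intervalIntegrable _ _))
              (((by fun_prop : Continuous (fun t : ℝ => ε^2 * Real.cos (π*t)^2))).intervalIntegrable _ _),
            intervalIntegral.integral_add intervalIntegrable_const
              (((by fun_prop : Continuous (fun t : ℝ => (2*ε) * Real.cos (π*t)))).intervalIntegrable _ _),
            intervalIntegral.integral_const, intervalIntegral.integral_const_mul,
            intervalIntegral.integral_const_mul, icos, icos2]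
          norm_num
  have hIy' : ∫ t in (0:ℝ)..1, (Y' t)^2 = ε^2*π^2*(1/2) := by
    have hfun : ∀ t : ℝ, (Y' t)^2 = (ε^2*π^2) * Real.sin (π*t)^2 := by
      intro t; rw [hY't]; ring
    calc ∫ t in (0:ℝ)..1, (Y' t)^2
        = ∫ t in (0:ℝ)..1, (ε^2*π^2) * Real.sin (π*t)^2 := by simp only [hfun]
      _ = ε^2*π^2*(1/2) := by rw [intervalIntegral.integral_const_mul, isin2]
  -- bound on the potential integral
  have hIqy : ∫ t in (0:ℝ)..1, q t * (Y t)^2 ≤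
      1 + (ε^2 + 2*r*δ*ε + r*(r-1)*δ^2/2)*(1/2)
        + (r* |δ| *ε^2 + r*(r-1)*δ^2*ε + (r*(r-1)/2)*δ^2*ε^2 + |δ| ^3*(1+ε)^2) := by
    have hmono : ∫ t in (0:ℝ)..1, q t * (Y t)^2 ≤
        ∫ t in (0:ℝ)..1, (1 + (2*ε + r*δ)*Real.cos (π*t)
          + (ε^2 + 2*r*δ*ε + r*(r-1)*δ^2/2)*Real.cos (π*t)^2
          + (r* |δ| *ε^2 + r*(r-1)*δ^2*ε + (r*(r-1)/2)*δ^2*ε^2 + |δ| ^3*(1+ε)^2)) := by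
      apply intervalIntegral.integral_mono_on zero_le_one
      · exact (hq_cont.mul (hYcont.pow 2)).intervalIntegrable _ _
      · apply Continuous.intervalIntegrable
        fun_prop
      · intro t _
        rw [hqt t, hYt t]
        exact pointwise_bound hr1 hr2 (Real.abs_cos_le_one (π*t)) hδhalf hε0.le hεhalf
    refine hmono.trans (le_of_eq ?_)
    rw [intervalIntegral.integral_add (IntervalIntegrable.add
        (IntervalIntegrable.add intervalIntegrable_const
          (((by fun_prop : Continuous (fun t : ℝ => (2*ε + r*δ) * Real.cos (π*t)))).intervalIntegrable _ _))
        (((by fun_prop : Continuous (fun t : ℝ =>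
          (ε^2 + 2*r*δ*ε + r*(r-1)*δ^2/2) * Real.cos (π*t)^2))).intervalIntegrable _ _))
        intervalIntegrable_const,
      intervalIntegral.integral_add (IntervalIntegrable.add intervalIntegrable_const
          (((by fun_prop : Continuous (fun t : ℝ => (2*ε + r*δ) * Real.cos (π*t)))).intervalIntegrable _ _))
        (((by fun_prop : Continuous (fun t : ℝ =>
          (ε^2 + 2*r*δ*ε + r*(r-1)*δ^2/2) * Real.cos (π*t)^2))).intervalIntegrable _ _),
      intervalIntegral.integral_add intervalIntegrable_const
        (((by fun_prop : Continuous (fun t : ℝ => (2*ε + r*δ) * Real.cos (π*t)))).intervalIntegrable _ _),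
      intervalIntegral.integral_const, intervalIntegral.integral_const_mul,
      intervalIntegral.integral_const_mul, icos, icos2, intervalIntegral.integral_const]
    simp only [smul_eq_mul, mul_zero, mul_one, sub_zero, one_smul]
    ring
  -- the Rayleigh quotient is < 1
  have hDpos : 0 < ∫ t in (0:ℝ)..1, (Y t)^2 := by rw [hIy]; positivity
  have hNsplit : ∫ t in (0:ℝ)..1, ((Y' t)^2 + q t * (Y t)^2)
      = (∫ t in (0:ℝ)..1, (Y' t)^2) + ∫ t in (0:ℝ)..1, q t * (Y t)^2 :=
    intervalIntegral.integral_add ((hY'cont.pow 2).intervalIntegrable _ _)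
      ((hq_cont.mul (hYcont.pow 2)).intervalIntegrable _ _)
  have hest := main_est hρr hρ0 hρ1 hr2 (by linarith) hη0 hη1 hη2 hεdef hδdef
  have hqq : (r*ρ/4)*δ^2 = (r*(r-1)*δ^2/2)*(1/2) := by rw [hρr]; ring
  have hray : Rayleigh q (Y, Y') < 1 := by
    unfold Rayleigh
    simp only
    rw [div_lt_one hDpos, hNsplit, hIy, hIy']
    nlinarith [hIqy, hest, hqq]
  -- conclude
  have hmem : Rayleigh q (Y, Y') ∈
      {x | ∃ p ∈ W12, 0 < (∫ t in (0:ℝ)..1, (p.1 t) ^ 2) ∧ x = Rayleigh q p} :=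
    ⟨(Y, Y'), hW, hDpos, rfl⟩
  have hlam : lambda1 q ≤ Rayleigh q (Y, Y') :=
    csInf_le ⟨0, fun x hx => rayleigh_nonneg hqA x hx⟩ hmem
  have hm : mGamma γ ≤ lambda1 q := by
    apply csInf_le
    · refine ⟨0, ?_⟩
      rintro x ⟨q', hq', rfl⟩
      exact lambda1_nonneg hq'
    · exact Set.mem_image_of_mem lambda1 hqA
  linarith
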